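/- The partial trace over the last n−m qubits of the rank-one operator |D_λ^n⟩⟨D_μ^n| between two n-qubit Dicke states equals Σ_{κ=0}^{n-m} (n−m choose κ) √[(m choose λ−κ)(m choose μ−κ)/((n choose λ)(n choose μ))] |D_{λ−κ}^m⟩⟨D_{μ−κ}^m|, where terms with λ−κ or μ−κ outside [0,m] are zero. -/

import Mathlib

open Finset

/-- The `n`-qubit Dicke state with `k` excitations, as a function `{0,1}^n → ℂ`. -/
noncomputable def dickeVec (n k : ℕ) : (Fin n → Fin 2) → ℂ := fun i =>
  if (Finset.univ.filter fun p => i p = 1).card = k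
    then ((Real.sqrt (n.choose k) : ℂ))⁻¹ else 0

lemma weight_le {r : ℕ} (c : Fin r → Fin 2) :
    (Finset.univ.filter fun p => c p = 1).card ≤ r := by
  simpa using Finset.card_filter_le Finset.univ (fun p => c p = 1)

lemma weight_append {m r : ℕ} (a : Fin m → Fin 2) (c : Fin r → Fin 2) :
    (Finset.univ.filter fun p => Fin.append a c p = 1).card
      = (Finset.univ.filter fun p => a p = 1).card
        + (Finset.univ.filter fun p => c p = 1).card := by
  classical
  rw [Finset.card_filter, Finset.card_filter, Finset.card_filter, Fin.sum_univ_add]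
  simp

lemma weight_count (r j : ℕ) :
    (Finset.univ.filter fun c : Fin r → Fin 2 =>
      (Finset.univ.filter fun p => c p = 1).card = j).card = r.choose j := by
  classical
  have h : (Finset.powersetCard j (Finset.univ : Finset (Fin r))).card = r.choose j := by
    simp [Finset.card_powersetCard]
  rw [← h]
  refine Finset.card_bij' (fun c _ => Finset.univ.filter fun p => c p = 1)
    (fun s _ => fun p => if p ∈ s then 1 else 0) ?hi ?hj ?li ?ri
  case hi =>
    intro c hc
    simp only [Finset.mem_filter, Finset.mem_univ, true_and] at hc
    simp [Finset.mem_powersetCard, hc]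
  case hj =>
    intro s hs
    simp only [Finset.mem_powersetCard] at hs
    simp only [Finset.mem_filter, Finset.mem_univ, true_and]
    rw [show (Finset.univ.filter fun p => (if p ∈ s then (1 : Fin 2) else 0) = 1) = s by
      ext p; simp only [Finset.mem_filter, Finset.mem_univ, true_and]
      split <;> simp_all]
    exact hs.2
  case li =>
    intro c hc
    funext p
    simp only [Finset.mem_filter, Finset.mem_univ, true_and]
    generalize c p = x
    fin_cases x <;> simp
  case ri =>
    intro s hs
    ext p
    simp only [Finset.mem_filter, Finset.mem_univ, true_and]
    split <;> simp_all

lemma sqrt_id (x y z w : ℝ) (hx : 0 < x) (hy : 0 < y) (hz : 0 < z) (hw : 0 < w) :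
    Real.sqrt ((x * y) / (z * w)) * ((Real.sqrt x)⁻¹ * (Real.sqrt y)⁻¹)
      = (Real.sqrt z)⁻¹ * (Real.sqrt w)⁻¹ := by
  rw [Real.sqrt_div (by positivity), Real.sqrt_mul hx.le, Real.sqrt_mul hz.le]
  have h1 := Real.sqrt_pos.mpr hx
  have h2 := Real.sqrt_pos.mpr hy
  have h3 := Real.sqrt_pos.mpr hz
  have h4 := Real.sqrt_pos.mpr hw
  field_simp


/-- The partial trace over the last `r = n - m` qubits of `|D_lam^n⟩⟨D_mu^n|` (`n = m + r`)
equals `Σ_{κ=0}^{r} (r choose κ) √[(m choose lam-κ)(m choose mu-κ)/((n choose lam)(n choose mu))]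
|D_{lam-κ}^m⟩⟨D_{mu-κ}^m|`, where terms with `lam-κ` or `mu-κ` outside `[0,m]` vanish. -/
theorem stmt_7 (m r lam mu : ℕ) (hlam : lam ≤ m + r) (hmu : mu ≤ m + r) :
    (fun a b => ∑ c : Fin r → Fin 2,
        dickeVec (m + r) lam (Fin.append a c) * star (dickeVec (m + r) mu (Fin.append b c)))
      = fun (a b : Fin m → Fin 2) =>
          ∑ κ ∈ Finset.range (r + 1),
            if κ ≤ lam ∧ κ ≤ mu then
              ((r.choose κ : ℂ) *
                ((Real.sqrt ((((m.choose (lam - κ)) * (m.choose (mu - κ)) : ℕ) : ℝ) /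
                    ((((m + r).choose lam) * ((m + r).choose mu) : ℕ) : ℝ)) : ℝ) : ℂ))
                * (dickeVec m (lam - κ) a * star (dickeVec m (mu - κ) b))
            else 0 := by
  classical
  funext a b
  have hwa : (Finset.univ.filter fun p => a p = 1).card ≤ m := weight_le a
  have hwb : (Finset.univ.filter fun p => b p = 1).card ≤ m := weight_le b
  set wa := (Finset.univ.filter fun p => a p = 1).card with hwadef
  set wb := (Finset.univ.filter fun p => b p = 1).card with hwbdef
  set G : ℕ → ℂ := fun j =>
      (if wa + j = lam then ((Real.sqrt (((m + r).choose lam : ℕ)) : ℂ))⁻¹ else 0)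
      * star (if wb + j = mu then ((Real.sqrt (((m + r).choose mu : ℕ)) : ℂ))⁻¹ else 0)
    with hG
  have hterm : ∀ c : Fin r → Fin 2,
      dickeVec (m + r) lam (Fin.append a c) * star (dickeVec (m + r) mu (Fin.append b c))
        = G ((Finset.univ.filter fun p => c p = 1).card) := by
    intro c
    simp only [dickeVec, weight_append, hG, ← hwadef, ← hwbdef]
  calc (∑ c : Fin r → Fin 2,
        dickeVec (m + r) lam (Fin.append a c) * star (dickeVec (m + r) mu (Fin.append b c)))
      = ∑ c : Fin r → Fin 2, G ((Finset.univ.filter fun p => c p = 1).card) :=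
        Finset.sum_congr rfl fun c _ => hterm c
    _ = ∑ j ∈ Finset.range (r + 1), ∑ c ∈ Finset.univ.filter
          (fun c : Fin r → Fin 2 => (Finset.univ.filter fun p => c p = 1).card = j),
          G ((Finset.univ.filter fun p => c p = 1).card) :=
        (Finset.sum_fiberwise_of_maps_to
          (fun c _ => Finset.mem_range.mpr (Nat.lt_succ_of_le (weight_le c))) _).symm
    _ = ∑ j ∈ Finset.range (r + 1), (r.choose j : ℂ) * G j := by
        refine Finset.sum_congr rfl fun j hj => ?_
        rw [Finset.sum_congr rfl (fun c hc => by
          rw [(Finset.mem_filter.mp hc).2]), Finset.sum_const, weight_count,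
          nsmul_eq_mul]
    _ = _ := by
        refine Finset.sum_congr rfl fun κ hκ => ?_
        have hκr : κ ≤ r := Nat.lt_succ_iff.mp (Finset.mem_range.mp hκ)
        by_cases h1 : wa + κ = lam
        · by_cases h2 : wb + κ = mu
          · have e1 : lam - κ = wa := by omega
            have e2 : mu - κ = wb := by omega
            rw [if_pos ⟨by omega, by omega⟩, hG]
            simp only [if_pos h1, if_pos h2, dickeVec, e1, e2, ← hwadef, ← hwbdef, if_pos rfl]
            have key : Real.sqrt ((((m.choose wa) * (m.choose wb) : ℕ) : ℝ) /
                  ((((m + r).choose lam) * ((m + r).choose mu) : ℕ) : ℝ))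
                * ((Real.sqrt ((m.choose wa : ℕ) : ℝ))⁻¹ * (Real.sqrt ((m.choose wb : ℕ) : ℝ))⁻¹)
                = (Real.sqrt (((m + r).choose lam : ℕ) : ℝ))⁻¹
                  * (Real.sqrt (((m + r).choose mu : ℕ) : ℝ))⁻¹ := by
              push_cast
              exact sqrt_id _ _ _ _
                (by exact_mod_cast Nat.choose_pos hwa)
                (by exact_mod_cast Nat.choose_pos hwb)
                (by exact_mod_cast Nat.choose_pos hlam)
                (by exact_mod_cast Nat.choose_pos hmu)
            have keyC := congrArg (fun t : ℝ => (t : ℂ)) key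
            push_cast at keyC ⊢
            simp only [Complex.star_def, map_inv₀, Complex.conj_ofReal]
            rw [← keyC]
            ring
          · rw [hG]
            simp only [if_neg h2, star_zero, mul_zero]
            by_cases hc : κ ≤ lam ∧ κ ≤ mu
            · rw [if_pos hc]
              have : wb ≠ mu - κ := by omega
              simp [dickeVec, ← hwbdef, this]
            · simp only [if_neg hc, mul_zero]
        · rw [hG]
          simp only [if_neg h1, zero_mul]
          by_cases hc : κ ≤ lam ∧ κ ≤ mu
          · rw [if_pos hc]
            have : wa ≠ lam - κ := by omega
            simp [dickeVec, ← hwadef, this]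
          · simp only [if_neg hc, mul_zero]
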